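/- Let N and c be positive integers with N > c, and let α be a real number. Let Ω̃ ⊆ ℝ^{N+c}, with coordinates A_1,…,A_N,D_1,…,D_c, be the set defined by the inequalities A_1⋯A_N ≤ D_1⋯D_c; A_1 ≥ A_2 ≥ … ≥ A_N ≥ 1; D_1 ≥ D_2 ≥ … ≥ D_c; D_1 ≥ 2A_1; and D_j ≥ A_j for 2 ≤ j ≤ c. Define L(A_1,…,A_N,D_1,…,D_c) = Σ_{i=1}^N A_i − Σ_{j=1}^c D_j + α. Then for every non-empty closed subset Ω ⊆ Ω̃, the function L attains its maximum on Ω, i.e. there exists a point P ∈ Ω such that L(P') ≤ L(P) for all P' ∈ Ω. -/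

import Mathlib

open Finset in
/-- Key boundedness lemma: on the region, if `∑ d ≤ ∑ a + β`, then `a 0` is
bounded by an explicit constant depending only on `N`, `c`, `β`. -/
lemma stmt_0_key (N c : ℕ) (hc : 0 < c) (hNc : c < N) (β : ℝ) (hβ : 0 ≤ β)
    (a d : ℕ → ℝ)
    (ha1 : ∀ i, i < N → 1 ≤ a i)
    (hmono : ∀ i j, i ≤ j → j < N → a j ≤ a i)
    (had : ∀ j, 0 < j → j < c → a j ≤ d j)
    (hd0 : 2 * a 0 ≤ d 0)
    (hprod : ∏ i ∈ range N, a i ≤ ∏ j ∈ range c, d j)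
    (hsum : ∑ j ∈ range c, d j ≤ ∑ i ∈ range N, a i + β) :
    a 0 ≤ ((N : ℝ) - c) * ((N : ℝ) * ((N : ℝ) - c) + N * β + β) ^ c + β := by
  have hN0 : 0 < N := hc.trans hNc
  have hNR : (1 : ℝ) ≤ N := by exact_mod_cast hN0
  have hcN : (c : ℝ) + 1 ≤ N := by exact_mod_cast hNc
  have ha0 : 1 ≤ a 0 := ha1 0 hN0
  have hd_ge : ∀ j, j < c → 1 ≤ d j := by
    intro j hj
    rcases Nat.eq_zero_or_pos j with h0 | h0
    · subst h0; linarith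
    · exact le_trans (ha1 j (hj.trans hNc)) (had j h0 hj)
  set u := a c with hu_def
  have hu1 : 1 ≤ u := ha1 c hNc
  have hu0 : 0 < u := lt_of_lt_of_le one_pos hu1
  set K : ℝ := (N : ℝ) * ((N : ℝ) - c) + N * β + β with hK_def
  have hK1 : 1 ≤ K := by nlinarith
  -- step 1 : a 0 + ∑_{j<c} a j ≤ ∑_{j<c} d j
  have step1 : a 0 + ∑ j ∈ range c, a j ≤ ∑ j ∈ range c, d j := by
    have hpos : ∀ j ∈ range c, 0 ≤ d j - a j := by
      intro j hj
      rcases Nat.eq_zero_or_pos j with h0 | h0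
      · subst h0; linarith
      · have := had j h0 (mem_range.mp hj); linarith
    have h := Finset.single_le_sum hpos (mem_range.mpr hc)
    have h2 : a 0 ≤ ∑ j ∈ range c, (d j - a j) := by
      refine le_trans ?_ h; linarith
    rw [Finset.sum_sub_distrib] at h2
    linarith
  -- sum splitting
  have hsplit : (∑ i ∈ range c, a i) + ∑ i ∈ Ico c N, a i = ∑ i ∈ range N, a i := by
    rw [range_eq_Ico, range_eq_Ico]
    exact Finset.sum_Ico_consecutive a (Nat.zero_le _) hNc.le
  have stepS : ∑ i ∈ Ico c N, a i ≤ ((N : ℝ) - c) * u := by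
    calc ∑ i ∈ Ico c N, a i ≤ ∑ _i ∈ Ico c N, u :=
          Finset.sum_le_sum fun i hi => hmono c i (mem_Ico.mp hi).1 (mem_Ico.mp hi).2
      _ = ((N : ℝ) - c) * u := by
          rw [Finset.sum_const, Nat.card_Ico, nsmul_eq_mul, Nat.cast_sub hNc.le]
  have stepA : a 0 ≤ ((N : ℝ) - c) * u + β := by linarith
  -- product lower bound
  have hprod_lower : u ^ (c + 1) ≤ ∏ i ∈ range N, a i := by
    have hsplitp : (∏ i ∈ range (c + 1), a i) * ∏ i ∈ Ico (c + 1) N, a i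
        = ∏ i ∈ range N, a i := by
      rw [range_eq_Ico, range_eq_Ico]
      exact Finset.prod_Ico_consecutive a (Nat.zero_le _) hNc
    have h2 : u ^ (c + 1) ≤ ∏ i ∈ range (c + 1), a i := by
      have : ∏ _i ∈ range (c + 1), u ≤ ∏ i ∈ range (c + 1), a i := by
        refine Finset.prod_le_prod (fun i _ => hu0.le) ?_
        intro i hi
        exact hmono i c (Nat.lt_succ_iff.mp (mem_range.mp hi)) hNc
      simpa using this
    have h3 : 1 ≤ ∏ i ∈ Ico (c + 1) N, a i := by
      have := Finset.prod_le_prod (s := Ico (c + 1) N) (f := fun _ => (1 : ℝ)) (g := a)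
        (fun i _ => zero_le_one) (fun i hi => ha1 i (mem_Ico.mp hi).2)
      simpa using this
    have h4 : 0 ≤ ∏ i ∈ range (c + 1), a i := le_trans (by positivity) h2
    calc u ^ (c + 1) ≤ (∏ i ∈ range (c + 1), a i) * 1 := by linarith
      _ ≤ (∏ i ∈ range (c + 1), a i) * ∏ i ∈ Ico (c + 1) N, a i := by
          exact mul_le_mul_of_nonneg_left h3 h4
      _ = ∏ i ∈ range N, a i := hsplitp
  -- product upper bound
  have hd_sum_nonneg : (0 : ℝ) ≤ ∑ j ∈ range c, d j :=
    Finset.sum_nonneg fun j hj => le_trans zero_le_one (hd_ge j (mem_range.mp hj))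
  have hprod_upper : ∏ j ∈ range c, d j ≤ (∑ j ∈ range c, d j) ^ c := by
    have : ∏ j ∈ range c, d j ≤ ∏ _j ∈ range c, (∑ j ∈ range c, d j) := by
      refine Finset.prod_le_prod (fun j hj => le_trans zero_le_one (hd_ge j (mem_range.mp hj))) ?_
      intro j hj
      exact Finset.single_le_sum
        (fun k hk => le_trans zero_le_one (hd_ge k (mem_range.mp hk))) hj
    simpa using this
  -- sum upper bound
  have hSuma : ∑ i ∈ range N, a i ≤ (N : ℝ) * a 0 := by
    calc ∑ i ∈ range N, a i ≤ ∑ _i ∈ range N, a 0 :=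
          Finset.sum_le_sum fun i hi => hmono 0 i (Nat.zero_le _) (mem_range.mp hi)
      _ = (N : ℝ) * a 0 := by rw [Finset.sum_const, card_range, nsmul_eq_mul]
  have hsum_upper : ∑ j ∈ range c, d j ≤ K * u := by
    have h1 : ∑ j ∈ range c, d j ≤ (N : ℝ) * (((N : ℝ) - c) * u + β) + β := by
      nlinarith
    have h2 : (0 : ℝ) ≤ ((N : ℝ) * β + β) * (u - 1) :=
      mul_nonneg (add_nonneg (mul_nonneg (by linarith) hβ) hβ) (by linarith)
    rw [hK_def]; nlinarith
  -- conclude u ≤ K ^ c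
  have hchain : u ^ (c + 1) ≤ (K * u) ^ c := by
    refine le_trans hprod_lower (le_trans hprod (le_trans hprod_upper ?_))
    exact pow_le_pow_left₀ hd_sum_nonneg hsum_upper c
  have huK : u ≤ K ^ c := by
    have hpow : 0 < u ^ c := pow_pos hu0 c
    have h : u * u ^ c ≤ K ^ c * u ^ c := by
      calc u * u ^ c = u ^ (c + 1) := by ring
        _ ≤ (K * u) ^ c := hchain
        _ = K ^ c * u ^ c := by rw [mul_pow]
    exact le_of_mul_le_mul_right h hpow
  have hNc' : (0 : ℝ) ≤ (N : ℝ) - c := by linarith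
  nlinarith

/-- Lemma on attainment of maximum.
Points of `ℝ^{N+c}` are encoded as pairs `P = (A, D)` with `A : Fin N → ℝ` and
`D : Fin c → ℝ` (so `A_1 = P.1 0`, …, `A_N = P.1 (N-1)` and similarly for `D`).
For every non-empty closed subset `Ω` of the region `Ω̃`, the linear function
`L(A, D) = Σ A_i − Σ D_j + α` attains its maximum on `Ω`. -/
theorem stmt_0 (N c : ℕ) (hc : 0 < c) (hNc : c < N) (α : ℝ)
    (Ω : Set ((Fin N → ℝ) × (Fin c → ℝ)))
    (hsub : Ω ⊆ {P : (Fin N → ℝ) × (Fin c → ℝ) |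
      (∏ i, P.1 i ≤ ∏ j, P.2 j) ∧
      (∀ i j : Fin N, i ≤ j → P.1 j ≤ P.1 i) ∧
      (1 ≤ P.1 ⟨N - 1, Nat.sub_lt (hc.trans hNc) one_pos⟩) ∧
      (∀ i j : Fin c, i ≤ j → P.2 j ≤ P.2 i) ∧
      (2 * P.1 ⟨0, hc.trans hNc⟩ ≤ P.2 ⟨0, hc⟩) ∧
      (∀ j : Fin c, 1 ≤ (j : ℕ) → P.1 ⟨(j : ℕ), j.isLt.trans hNc⟩ ≤ P.2 j)})
    (hclosed : IsClosed Ω) (hne : Ω.Nonempty) :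
    ∃ P ∈ Ω, ∀ P' ∈ Ω,
      (∑ i, P'.1 i - ∑ j, P'.2 j + α) ≤ (∑ i, P.1 i - ∑ j, P.2 j + α) := by
  classical
  obtain ⟨P₀, hP₀⟩ := hne
  set L : (Fin N → ℝ) × (Fin c → ℝ) → ℝ :=
    fun P => ∑ i, P.1 i - ∑ j, P.2 j + α with hL_def
  have hLcont : Continuous L := by fun_prop
  set t : ℝ := L P₀ with ht_def
  set β : ℝ := max (α - t) 0 with hβ_def
  have hβ0 : 0 ≤ β := le_max_right _ _
  set Kc : ℝ := (N : ℝ) * ((N : ℝ) - c) + N * β + β with hKc_def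
  set B : ℝ := ((N : ℝ) - c) * Kc ^ c + β with hB_def
  set M : ℝ := (N : ℝ) * B + β with hM_def
  -- the superlevel set
  set S : Set ((Fin N → ℝ) × (Fin c → ℝ)) := Ω ∩ {P | t ≤ L P} with hS_def
  have hP₀S : P₀ ∈ S := ⟨hP₀, le_refl t⟩
  have hSclosed : IsClosed S :=
    hclosed.inter (isClosed_le continuous_const hLcont)
  have hN0 : 0 < N := hc.trans hNc
  have hNR : (1 : ℝ) ≤ N := by exact_mod_cast hN0
  have hcN : (c : ℝ) + 1 ≤ N := by exact_mod_cast hNc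
  -- bounds on points of S
  have hbound : ∀ P ∈ S, (∀ i, 0 ≤ P.1 i ∧ P.1 i ≤ M) ∧ (∀ j, 0 ≤ P.2 j ∧ P.2 j ≤ M) := by
    rintro P ⟨hPΩ, hPt⟩
    obtain ⟨hprod, hAmono, hAN, hDmono, hD0, hDj⟩ := hsub hPΩ
    set a : ℕ → ℝ := fun n => if h : n < N then P.1 ⟨n, h⟩ else 1 with ha_def
    set d : ℕ → ℝ := fun n => if h : n < c then P.2 ⟨n, h⟩ else 1 with hd_def
    have haval : ∀ i : Fin N, a (i : ℕ) = P.1 i := by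
      intro i; simp [ha_def, i.isLt]
    have hdval : ∀ j : Fin c, d (j : ℕ) = P.2 j := by
      intro j; simp [hd_def, j.isLt]
    have hsa : ∑ i ∈ Finset.range N, a i = ∑ i, P.1 i := by
      rw [← Fin.sum_univ_eq_sum_range]
      exact Finset.sum_congr rfl fun i _ => haval i
    have hsd : ∑ j ∈ Finset.range c, d j = ∑ j, P.2 j := by
      rw [← Fin.sum_univ_eq_sum_range]
      exact Finset.sum_congr rfl fun j _ => hdval j
    have hpa : ∏ i ∈ Finset.range N, a i = ∏ i, P.1 i := by
      rw [← Fin.prod_univ_eq_prod_range]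
      exact Finset.prod_congr rfl fun i _ => haval i
    have hpd : ∏ j ∈ Finset.range c, d j = ∏ j, P.2 j := by
      rw [← Fin.prod_univ_eq_prod_range]
      exact Finset.prod_congr rfl fun j _ => hdval j
    have ha1 : ∀ i, i < N → 1 ≤ a i := by
      intro i hi
      have h := hAmono ⟨i, hi⟩ ⟨N - 1, Nat.sub_lt hN0 one_pos⟩
        (by rw [Fin.le_def]; exact Nat.le_sub_one_of_lt hi)
      have : a i = P.1 ⟨i, hi⟩ := by simp [ha_def, hi]
      rw [this]; exact le_trans hAN h
    have hmono : ∀ i j, i ≤ j → j < N → a j ≤ a i := by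
      intro i j hij hjN
      have hiN : i < N := lt_of_le_of_lt hij hjN
      have h := hAmono ⟨i, hiN⟩ ⟨j, hjN⟩ (by rw [Fin.le_def]; exact hij)
      simpa [ha_def, hiN, hjN] using h
    have had : ∀ j, 0 < j → j < c → a j ≤ d j := by
      intro j h0 hjc
      have h := hDj ⟨j, hjc⟩ h0
      have hjN : j < N := hjc.trans hNc
      simpa [ha_def, hd_def, hjc, hjN] using h
    have hd0 : 2 * a 0 ≤ d 0 := by
      have h := hD0
      simpa [ha_def, hd_def, hN0, hc] using h
    have hprod' : ∏ i ∈ Finset.range N, a i ≤ ∏ j ∈ Finset.range c, d j := by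
      rw [hpa, hpd]; exact hprod
    have hsum' : ∑ j ∈ Finset.range c, d j ≤ ∑ i ∈ Finset.range N, a i + β := by
      rw [hsa, hsd]
      have : t ≤ ∑ i, P.1 i - ∑ j, P.2 j + α := hPt
      have hβge : α - t ≤ β := le_max_left _ _
      linarith
    have ha0B : a 0 ≤ B :=
      stmt_0_key N c hc hNc β hβ0 a d ha1 hmono had hd0 hprod' hsum'
    have ha00 : 1 ≤ a 0 := ha1 0 hN0
    have hB1 : 1 ≤ B := le_trans ha00 ha0B
    have hSuma : ∑ i ∈ Finset.range N, a i ≤ (N : ℝ) * a 0 := by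
      calc ∑ i ∈ Finset.range N, a i ≤ ∑ _i ∈ Finset.range N, a 0 :=
            Finset.sum_le_sum fun i hi => hmono 0 i (Nat.zero_le _) (Finset.mem_range.mp hi)
        _ = (N : ℝ) * a 0 := by rw [Finset.sum_const, Finset.card_range, nsmul_eq_mul]
    have hSumdM : ∑ j ∈ Finset.range c, d j ≤ M := by
      have : (N : ℝ) * a 0 ≤ (N : ℝ) * B := by nlinarith
      calc ∑ j ∈ Finset.range c, d j ≤ ∑ i ∈ Finset.range N, a i + β := hsum'
        _ ≤ (N : ℝ) * a 0 + β := by linarith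
        _ ≤ (N : ℝ) * B + β := by linarith
    have hd_ge : ∀ j, j < c → 1 ≤ d j := by
      intro j hj
      rcases Nat.eq_zero_or_pos j with h0 | h0
      · subst h0; linarith
      · exact le_trans (ha1 j (hj.trans hNc)) (had j h0 hj)
    have hBM : B ≤ M := by nlinarith
    constructor
    · intro i
      have h1 := ha1 (i : ℕ) i.isLt
      rw [haval i] at h1
      have h2 : a (i : ℕ) ≤ a 0 := hmono 0 (i : ℕ) (Nat.zero_le _) i.isLt
      rw [haval i] at h2
      exact ⟨by linarith, by linarith⟩
    · intro j
      have h1 := hd_ge (j : ℕ) j.isLt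
      rw [hdval j] at h1
      have h2 : d (j : ℕ) ≤ ∑ k ∈ Finset.range c, d k :=
        Finset.single_le_sum
          (fun k hk => le_trans zero_le_one (hd_ge k (Finset.mem_range.mp hk)))
          (Finset.mem_range.mpr j.isLt)
      rw [hdval j] at h2
      exact ⟨by linarith, by linarith⟩
  -- S is compact
  have hSsub : S ⊆ Set.Icc ((0 : Fin N → ℝ), (0 : Fin c → ℝ)) ((fun _ => M), (fun _ => M)) := by
    intro P hP
    obtain ⟨hA, hD⟩ := hbound P hP
    refine ⟨⟨fun i => (hA i).1, fun j => (hD j).1⟩, ⟨fun i => (hA i).2, fun j => (hD j).2⟩⟩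
  have hScompact : IsCompact S :=
    IsCompact.of_isClosed_subset isCompact_Icc hSclosed hSsub
  obtain ⟨P, hPS, hPmax⟩ := hScompact.exists_isMaxOn ⟨P₀, hP₀S⟩ hLcont.continuousOn
  refine ⟨P, hPS.1, ?_⟩
  intro P' hP'
  by_cases h : t ≤ L P'
  · exact hPmax ⟨hP', h⟩
  · have h1 : L P₀ ≤ L P := hPmax hP₀S
    have h2 : L P' < t := lt_of_not_ge h
    calc (∑ i, P'.1 i - ∑ j, P'.2 j + α) = L P' := rfl
      _ ≤ L P := by rw [ht_def] at h2; linarith
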